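/- (Filippov–Roxin selection step) Let K be a compact metrizable space, y measurable, and suppose φ : I × K → ℝ and F : I × K → X (X a Banach space) are Carathéodory maps. For ν : I → P(K) weakly* measurable, define α(t) = ∫_K φ(t,s) ν_t(ds) and q(t) = ∫_K F(t,s) ν_t(ds). If for a.e. t the set Q(t) = {(a, F(t,s)) : a ≥ φ(t,s), s ∈ K} is convex and closed and contains (α(t), q(t)), then the multivalued map S(t) = {s ∈ K : φ(t,s) ≤ α(t), F(t,s) = q(t)} is nonempty, closed-valued, and measurable, and hence admits a measurable selection ū : I → K with ū(t) ∈ S(t) for a.e. t. -/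

import Mathlib

open MeasureTheory
open scoped BoundedContinuousFunction


open MeasureTheory Filter Topology Metric TopologicalSpace

open Classical in
/-- Auxiliary recursive sequence of indices into the dense sequence `c`,
used in the Kuratowski–Ryll-Nardzewski style selection construction. -/
noncomputable def frSelSeq {α K : Type*} [PseudoMetricSpace K]
    (H : α → K → ℝ) (c : ℕ → K) : ℕ → α → ℕ
  | 0 => fun t =>
      if h : ∃ n, ∃ s, H t s = 0 ∧ dist s (c n) < (1 / 2 : ℝ) ^ 0 then Nat.find h else 0
  | (k + 1) => fun t =>
      if h : ∃ n, (∃ s, H t s = 0 ∧ dist s (c n) < (1 / 2 : ℝ) ^ (k + 1)) ∧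
          dist (c n) (c (frSelSeq H c k t)) < 3 * (1 / 2 : ℝ) ^ (k + 1) then Nat.find h else 0

/-- Measurable selection of a zero of a nonnegative Carathéodory function that has a zero
for every parameter value. -/
theorem frSelection {α : Type*} [MeasurableSpace α]
    {K : Type*} [MetricSpace K] [CompactSpace K] [SecondCountableTopology K]
    [MeasurableSpace K] [BorelSpace K] [Nonempty K]
    (H : α → K → ℝ) (hHm : ∀ s : K, Measurable fun t => H t s)
    (hHc : ∀ t, Continuous (H t)) (hH0 : ∀ t s, 0 ≤ H t s)
    (hne : ∀ t, ∃ s, H t s = 0) :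
    ∃ u : α → K, Measurable u ∧ ∀ t, H t (u t) = 0 := by
  classical
  set c : ℕ → K := denseSeq K with hcdef
  have hc : DenseRange c := denseRange_denseSeq K
  have hcd : ∀ (x : K) (ε : ℝ), 0 < ε → ∃ n, dist x (c n) < ε := fun x ε hε =>
    denseRange_iff.1 hc x ε hε
  -- measurability of the "hitting" sets
  have key : ∀ (x : K) (r : ℝ), 0 < r →
      MeasurableSet {t | ∃ s, H t s = 0 ∧ dist s x < r} := by
    intro x r hr
    have hset : {t | ∃ s, H t s = 0 ∧ dist s x < r} =
        ⋃ q : ℚ, ⋃ (_ : 0 < (q : ℝ) ∧ (q : ℝ) < r),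
          ⋂ ε : ℚ, ⋂ (_ : 0 < (ε : ℝ)), ⋃ n : ℕ, ⋃ (_ : dist (c n) x < (q : ℝ)),
            {t | H t (c n) < (ε : ℝ)} := by
      ext t
      simp only [Set.mem_setOf_eq, Set.mem_iUnion, Set.mem_iInter]
      constructor
      · rintro ⟨s, hs0, hsr⟩
        obtain ⟨q, hq1, hq2⟩ := exists_rat_btwn hsr
        refine ⟨q, ⟨lt_of_le_of_lt dist_nonneg hq1, hq2⟩, ?_⟩
        intro ε hε
        obtain ⟨δ, hδ0, hδ⟩ := Metric.continuous_iff.1 (hHc t) s (ε : ℝ) hε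
        obtain ⟨n, hn⟩ := hcd s (min δ ((q : ℝ) - dist s x)) (lt_min hδ0 (by linarith))
        have hns : dist (c n) s < min δ ((q : ℝ) - dist s x) := by
          rwa [dist_comm] at hn
        refine ⟨n, ?_, ?_⟩
        · calc dist (c n) x ≤ dist (c n) s + dist s x := dist_triangle _ _ _
            _ < ((q : ℝ) - dist s x) + dist s x :=
                add_lt_add_of_lt_of_le (lt_of_lt_of_le hns (min_le_right _ _)) le_rfl
            _ = (q : ℝ) := by ring
        · have := hδ (c n) (lt_of_lt_of_le hns (min_le_left _ _))
          rw [Real.dist_eq, hs0, sub_zero] at this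
          exact lt_of_le_of_lt (le_abs_self _) this
      · rintro ⟨q, ⟨hq0, hqr⟩, hq⟩
        have hsel : ∀ k : ℕ, ∃ n, dist (c n) x < (q : ℝ) ∧ H t (c n) < 1 / (k + 1 : ℝ) := by
          intro k
          have hpos : 0 < ((1 / (k + 1) : ℚ) : ℝ) := by positivity
          obtain ⟨n, hn1, hn2⟩ := hq (1 / (k + 1) : ℚ) hpos
          refine ⟨n, hn1, ?_⟩
          have : ((1 / (k + 1) : ℚ) : ℝ) = 1 / (k + 1 : ℝ) := by push_cast; ring
          rwa [this] at hn2
        choose n hn1 hn2 using hsel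
        have hmem : ∀ k, c (n k) ∈ closedBall x (q : ℝ) := fun k =>
          mem_closedBall.2 (hn1 k).le
        obtain ⟨s₀, hs₀mem, ψ, hψmono, hψtend⟩ :=
          (Metric.isClosed_closedBall.isCompact).tendsto_subseq hmem
        have h1 : Tendsto (fun j => H t (c (n (ψ j)))) atTop (𝓝 (H t s₀)) :=
          ((hHc t).tendsto s₀).comp hψtend
        have h2 : Tendsto (fun j => H t (c (n (ψ j)))) atTop (𝓝 0) := by
          apply squeeze_zero (fun j => hH0 t _) (fun j => ?_)
            tendsto_one_div_add_atTop_nhds_zero_nat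
          have hle : (j : ℝ) + 1 ≤ (ψ j : ℝ) + 1 := by
            have h : (j : ℝ) ≤ (ψ j : ℝ) := by exact_mod_cast hψmono.le_apply
            linarith
          exact le_trans (hn2 (ψ j)).le (by
            apply one_div_le_one_div_of_le (by positivity) hle)
        have hzero : H t s₀ = 0 := tendsto_nhds_unique h1 h2
        exact ⟨s₀, hzero, lt_of_le_of_lt (mem_closedBall.1 hs₀mem) hqr⟩
    rw [hset]
    refine MeasurableSet.iUnion fun q => MeasurableSet.iUnion fun _ =>
      MeasurableSet.iInter fun ε => MeasurableSet.iInter fun _ =>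
        MeasurableSet.iUnion fun m => MeasurableSet.iUnion fun _ =>
          measurableSet_lt (hHm (c m)) measurable_const
  set g : ℕ → α → ℕ := frSelSeq H c with hgdef
  have hg0ex : ∀ t, ∃ m, ∃ s, H t s = 0 ∧ dist s (c m) < (1 / 2 : ℝ) ^ 0 := by
    intro t
    obtain ⟨s, hs⟩ := hne t
    obtain ⟨m, hm⟩ := hcd s ((1 / 2 : ℝ) ^ 0) (by norm_num)
    exact ⟨m, s, hs, hm⟩
  have hg0 : ∀ t, g 0 t = Nat.find (hg0ex t) := fun t => dif_pos (hg0ex t)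
  have step : ∀ k t, (∃ s, H t s = 0 ∧ dist s (c (g k t)) < (1 / 2 : ℝ) ^ k) →
      ∃ m, (∃ s, H t s = 0 ∧ dist s (c m) < (1 / 2 : ℝ) ^ (k + 1)) ∧
        dist (c m) (c (g k t)) < 3 * (1 / 2 : ℝ) ^ (k + 1) := by
    rintro k t ⟨s, hs0, hsd⟩
    obtain ⟨m, hm⟩ := hcd s ((1 / 2 : ℝ) ^ (k + 1)) (by positivity)
    have hms : dist (c m) s < (1 / 2 : ℝ) ^ (k + 1) := by rwa [dist_comm] at hm
    refine ⟨m, ⟨s, hs0, hm⟩, ?_⟩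
    calc dist (c m) (c (g k t)) ≤ dist (c m) s + dist s (c (g k t)) := dist_triangle _ _ _
      _ < (1 / 2 : ℝ) ^ (k + 1) + (1 / 2 : ℝ) ^ k := add_lt_add hms hsd
      _ = 3 * (1 / 2 : ℝ) ^ (k + 1) := by ring
  have inv : ∀ k t, ∃ s, H t s = 0 ∧ dist s (c (g k t)) < (1 / 2 : ℝ) ^ k := by
    intro k
    induction k with
    | zero =>
      intro t
      rw [hg0 t]
      exact Nat.find_spec (hg0ex t)
    | succ k ih =>
      intro t
      have hex := step k t (ih t)
      have : g (k + 1) t = Nat.find hex := dif_pos hex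
      rw [this]
      exact (Nat.find_spec hex).1
  have hstep : ∀ k t, dist (c (g (k + 1) t)) (c (g k t)) < 3 * (1 / 2 : ℝ) ^ (k + 1) := by
    intro k t
    have hex := step k t (inv k t)
    have : g (k + 1) t = Nat.find hex := dif_pos hex
    rw [this]
    exact (Nat.find_spec hex).2
  -- measurability of g
  have hgm : ∀ k, Measurable (g k) := by
    intro k
    induction k with
    | zero =>
      apply measurable_to_countable'
      intro m
      have hset : g 0 ⁻¹' {m} =
          {t | ∃ s, H t s = 0 ∧ dist s (c m) < (1 / 2 : ℝ) ^ 0} ∩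
            ⋂ (j : ℕ), ⋂ (_ : j < m),
              {t | ∃ s, H t s = 0 ∧ dist s (c j) < (1 / 2 : ℝ) ^ 0}ᶜ := by
        ext t
        simp only [Set.mem_preimage, Set.mem_singleton_iff, Set.mem_inter_iff,
          Set.mem_iInter, Set.mem_compl_iff, Set.mem_setOf_eq, hg0 t, Nat.find_eq_iff]
      rw [hset]
      exact (key (c m) _ (by norm_num)).inter
        (MeasurableSet.iInter fun j => MeasurableSet.iInter fun _ =>
          (key (c j) _ (by norm_num)).compl)
    | succ k ih =>
      apply measurable_to_countable'
      intro m
      have hQm : ∀ j : ℕ, MeasurableSet {t | (∃ s, H t s = 0 ∧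
          dist s (c j) < (1 / 2 : ℝ) ^ (k + 1)) ∧
          dist (c j) (c (g k t)) < 3 * (1 / 2 : ℝ) ^ (k + 1)} := by
        intro j
        have : {t | (∃ s, H t s = 0 ∧ dist s (c j) < (1 / 2 : ℝ) ^ (k + 1)) ∧
            dist (c j) (c (g k t)) < 3 * (1 / 2 : ℝ) ^ (k + 1)} =
            {t | ∃ s, H t s = 0 ∧ dist s (c j) < (1 / 2 : ℝ) ^ (k + 1)} ∩
              g k ⁻¹' {m' | dist (c j) (c m') < 3 * (1 / 2 : ℝ) ^ (k + 1)} := rfl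
        rw [this]
        exact (key (c j) _ (by positivity)).inter
          (ih ((Set.to_countable _).measurableSet))
      have hset : g (k + 1) ⁻¹' {m} =
          {t | (∃ s, H t s = 0 ∧ dist s (c m) < (1 / 2 : ℝ) ^ (k + 1)) ∧
              dist (c m) (c (g k t)) < 3 * (1 / 2 : ℝ) ^ (k + 1)} ∩
            ⋂ (j : ℕ), ⋂ (_ : j < m),
              {t | (∃ s, H t s = 0 ∧ dist s (c j) < (1 / 2 : ℝ) ^ (k + 1)) ∧
                dist (c j) (c (g k t)) < 3 * (1 / 2 : ℝ) ^ (k + 1)}ᶜ := by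
        ext t
        have hex := step k t (inv k t)
        have hgk : g (k + 1) t = Nat.find hex := dif_pos hex
        simp only [Set.mem_preimage, Set.mem_singleton_iff, Set.mem_inter_iff,
          Set.mem_iInter, Set.mem_compl_iff, Set.mem_setOf_eq, hgk, Nat.find_eq_iff]
      rw [hset]
      exact (hQm m).inter
        (MeasurableSet.iInter fun j => MeasurableSet.iInter fun _ => (hQm j).compl)
  -- the approximating sequence and its limit
  set v : ℕ → α → K := fun k t => c (g k t) with hvdef
  have hvm : ∀ k, Measurable (v k) := fun k =>
    (measurable_from_top (f := c)).comp (hgm k)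
  have hcauchy : ∀ t, CauchySeq fun k => v k t := by
    intro t
    apply cauchySeq_of_le_geometric (1 / 2 : ℝ) (3 / 2) (by norm_num)
    intro k
    have := hstep k t
    rw [dist_comm] at this
    calc dist (v k t) (v (k + 1) t) ≤ 3 * (1 / 2 : ℝ) ^ (k + 1) := this.le
      _ = 3 / 2 * (1 / 2 : ℝ) ^ k := by ring
  have hlim : ∀ t, ∃ x, Tendsto (fun k => v k t) atTop (𝓝 x) := fun t =>
    cauchySeq_tendsto_of_complete (hcauchy t)
  choose u hu using hlim
  refine ⟨u, ?_, ?_⟩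
  · apply measurable_of_tendsto_metrizable hvm
    rw [tendsto_pi_nhds]
    exact hu
  · intro t
    obtain hs := fun k => inv k t
    choose s hs0 hsd using hs
    have hst : Tendsto s atTop (𝓝 (u t)) := by
      rw [tendsto_iff_dist_tendsto_zero]
      apply squeeze_zero (fun k => dist_nonneg)
        (g := fun k => (1 / 2 : ℝ) ^ k + dist (v k t) (u t))
      · intro k
        calc dist (s k) (u t) ≤ dist (s k) (v k t) + dist (v k t) (u t) := dist_triangle _ _ _
          _ ≤ (1 / 2 : ℝ) ^ k + dist (v k t) (u t) :=
              add_le_add (hsd k).le le_rfl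
      · have h1 : Tendsto (fun k : ℕ => (1 / 2 : ℝ) ^ k) atTop (𝓝 0) :=
          tendsto_pow_atTop_nhds_zero_of_lt_one (by norm_num) (by norm_num)
        have h2 : Tendsto (fun k => dist (v k t) (u t)) atTop (𝓝 0) := by
          have := (hu t).dist (tendsto_const_nhds (x := u t))
          simpa using this
        simpa using h1.add h2
    have h1 : Tendsto (fun k => H t (s k)) atTop (𝓝 (H t (u t))) :=
      ((hHc t).tendsto (u t)).comp hst
    have h2 : Tendsto (fun k => H t (s k)) atTop (𝓝 0) := by
      simp only [hs0]
      exact tendsto_const_nhds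
    exact tendsto_nhds_unique h1 h2


open MeasureTheory Filter Topology Metric TopologicalSpace
open scoped BoundedContinuousFunction

/-- The parametric integral of a Carathéodory map against a weakly* measurable family of
(a.e.) probability measures is a.e. strongly measurable. -/
theorem frAESM {K : Type*} [MetricSpace K] [CompactSpace K] [SecondCountableTopology K]
    [MeasurableSpace K] [BorelSpace K] [Nonempty K]
    {Y : Type*} [NormedAddCommGroup Y] [NormedSpace ℝ Y] [CompleteSpace Y]
    (G : ℝ → K → Y) (hGm : ∀ s : K, StronglyMeasurable fun t => G t s)
    (hGc : ∀ t, Continuous (G t))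
    (ν : ℝ → Measure K) (hνw : ∀ g : K →ᵇ ℝ, Measurable fun t => ∫ s, g s ∂(ν t))
    (μ : Measure ℝ) (hνp : ∀ᵐ t ∂μ, IsProbabilityMeasure (ν t)) :
    AEStronglyMeasurable (fun t => ∫ s, G t s ∂(ν t)) μ := by
  classical
  set c : ℕ → K := denseSeq K with hcdef
  have hc : DenseRange c := denseRange_denseSeq K
  have hcd : ∀ (x : K) (ε : ℝ), 0 < ε → ∃ n, dist x (c n) < ε := fun x ε hε =>
    denseRange_iff.1 hc x ε hε
  have hcs : ∀ f : K → Y, HasCompactSupport f := fun f =>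
    (isClosed_tsupport f).isCompact
  have hcsR : ∀ f : K → ℝ, HasCompactSupport f := fun f =>
    (isClosed_tsupport f).isCompact
  -- for each n, a finite subcover by balls of radius 1/(n+1)
  have hcov : ∀ n : ℕ, (Set.univ : Set K) ⊆ ⋃ i : ℕ, Metric.ball (c i) (1 / (n + 1 : ℝ)) := by
    intro n x _
    obtain ⟨i, hi⟩ := hcd x (1 / (n + 1 : ℝ)) (by positivity)
    exact Set.mem_iUnion.2 ⟨i, Metric.mem_ball.2 hi⟩
  have hfin : ∀ n : ℕ, ∃ A : Finset ℕ,
      (Set.univ : Set K) ⊆ ⋃ i ∈ A, Metric.ball (c i) (1 / (n + 1 : ℝ)) := fun n =>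
    isCompact_univ.elim_finite_subcover _ (fun i => Metric.isOpen_ball) (hcov n)
  choose A hA using hfin
  -- bump functions
  set ψ : ℕ → ℕ → K → ℝ := fun n i s => max ((1 / (n + 1 : ℝ)) - dist s (c i)) 0 with hψdef
  have hψc : ∀ n i, Continuous (ψ n i) :=
    fun n i => ((continuous_const.sub (continuous_id.dist continuous_const)).max continuous_const)
  have hψ0 : ∀ n i s, 0 ≤ ψ n i s := fun n i s => le_max_right _ _
  have hden : ∀ n s, 0 < ∑ i ∈ A n, ψ n i s := by
    intro n s
    obtain ⟨i, hiA, hi⟩ := Set.mem_iUnion₂.1 (hA n (Set.mem_univ s))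
    refine Finset.sum_pos' (fun j _ => hψ0 n j s) ⟨i, hiA, ?_⟩
    have : dist s (c i) < 1 / (n + 1 : ℝ) := Metric.mem_ball.1 hi
    simp only [hψdef]
    exact lt_max_of_lt_left (by linarith)
  set χ : ℕ → ℕ → K → ℝ := fun n i s => ψ n i s / ∑ j ∈ A n, ψ n j s with hχdef
  have hχc : ∀ n i, Continuous (χ n i) := by
    intro n i
    exact (hψc n i).div (continuous_finset_sum _ fun j _ => hψc n j)
      (fun s => (hden n s).ne')
  have hχ0 : ∀ n i s, 0 ≤ χ n i s := fun n i s => div_nonneg (hψ0 n i s) (hden n s).le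
  have hχ1 : ∀ n s, ∑ i ∈ A n, χ n i s = 1 := by
    intro n s
    rw [hχdef]
    rw [← Finset.sum_div]
    exact div_self (hden n s).ne'
  have hχsupp : ∀ n i s, χ n i s ≠ 0 → dist s (c i) < 1 / (n + 1 : ℝ) := by
    intro n i s h
    by_contra hd
    push_neg at hd
    apply h
    have : ψ n i s = 0 := max_eq_right (by linarith)
    simp [hχdef, this]
  -- approximating sequence
  set Gn : ℕ → ℝ → Y := fun n t => ∑ i ∈ A n, (∫ s, χ n i s ∂(ν t)) • G t (c i) with hGndef
  have hGnm : ∀ n, StronglyMeasurable (Gn n) := by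
    intro n
    apply Finset.stronglyMeasurable_fun_sum
    intro i _
    have hb : Measurable fun t => ∫ s, χ n i s ∂(ν t) := by
      have := hνw (BoundedContinuousFunction.mkOfCompact ⟨χ n i, hχc n i⟩)
      simpa using this
    exact hb.stronglyMeasurable.smul (hGm (c i))
  refine aestronglyMeasurable_of_tendsto_ae atTop
    (fun n => (hGnm n).aestronglyMeasurable) ?_
  filter_upwards [hνp] with t hprob
  haveI := hprob
  rw [Metric.tendsto_atTop]
  intro ε hε
  obtain ⟨δ, hδ0, hδ⟩ := Metric.uniformContinuous_iff.1
    (CompactSpace.uniformContinuous_of_continuous (hGc t)) (ε / 2) (half_pos hε)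
  obtain ⟨N, hN⟩ := exists_nat_one_div_lt hδ0
  refine ⟨N, fun n hn => ?_⟩
  have hδn : 1 / (n + 1 : ℝ) < δ := by
    have h1 : 1 / (n + 1 : ℝ) ≤ 1 / (N + 1 : ℝ) := by
      apply one_div_le_one_div_of_le (by positivity)
      have : (N : ℝ) ≤ n := by exact_mod_cast hn
      linarith
    linarith
  -- pointwise bound
  have hpt : ∀ s, ‖G t s - ∑ i ∈ A n, χ n i s • G t (c i)‖ ≤ ε / 2 := by
    intro s
    have h1 : G t s = ∑ i ∈ A n, χ n i s • G t s := by
      rw [← Finset.sum_smul, hχ1 n s, one_smul]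
    have h2 : ∑ i ∈ A n, χ n i s • (G t s - G t (c i)) =
        G t s - ∑ i ∈ A n, χ n i s • G t (c i) := by
      simp only [smul_sub, Finset.sum_sub_distrib]
      rw [← h1]
    calc ‖G t s - ∑ i ∈ A n, χ n i s • G t (c i)‖
        = ‖∑ i ∈ A n, χ n i s • (G t s - G t (c i))‖ := by rw [h2]
      _ ≤ ∑ i ∈ A n, ‖χ n i s • (G t s - G t (c i))‖ := norm_sum_le _ _
      _ ≤ ∑ i ∈ A n, χ n i s * (ε / 2) := by
          apply Finset.sum_le_sum
          intro i _
          rw [norm_smul, Real.norm_eq_abs, abs_of_nonneg (hχ0 n i s)]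
          by_cases hzero : χ n i s = 0
          · simp [hzero]
          · have hd : dist s (c i) < δ := lt_trans (hχsupp n i s hzero) hδn
            have := hδ hd
            rw [dist_eq_norm] at this
            exact mul_le_mul_of_nonneg_left this.le (hχ0 n i s)
      _ = ε / 2 := by rw [← Finset.sum_mul, hχ1 n s, one_mul]
  -- rewrite Gn as an integral
  have hint : ∀ i, Integrable (fun s => χ n i s • G t (c i)) (ν t) :=
    fun i => ((hχc n i).smul continuous_const).integrable_of_hasCompactSupport (hcs _)
  have hintG : Integrable (G t) (ν t) :=
    (hGc t).integrable_of_hasCompactSupport (hcs _)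
  have hGn : Gn n t = ∫ s, ∑ i ∈ A n, χ n i s • G t (c i) ∂(ν t) := by
    rw [integral_finset_sum _ fun i _ => hint i]
    simp only [hGndef]
    congr 1
    ext i
    rw [integral_smul_const]
  rw [dist_eq_norm, hGn]
  have hintP : Integrable (fun s => ∑ i ∈ A n, χ n i s • G t (c i)) (ν t) :=
    integrable_finset_sum _ fun i _ => hint i
  rw [← integral_sub hintP hintG]
  calc ‖∫ s, (∑ i ∈ A n, χ n i s • G t (c i)) - G t s ∂(ν t)‖
      ≤ (ε / 2) * ((ν t) Set.univ).toReal := by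
        apply norm_integral_le_of_norm_le_const
        apply Eventually.of_forall
        intro s
        rw [norm_sub_rev]
        exact hpt s
    _ = ε / 2 := by simp [measure_univ]
    _ < ε := by linarith


open MeasureTheory Filter Topology Metric TopologicalSpace
open scoped BoundedContinuousFunction


/-- Filippov–Roxin selection step: on `I = [0,T]` with Lebesgue measure, let
`K` be compact metrizable, `X` a Banach space, `φ : I × K → ℝ` and `F : I × K → X`
Carathéodory maps, and `ν : I → P(K)` weakly* measurable.  Put `α(t) = ∫_K φ(t,·) dν_t` and
`q(t) = ∫_K F(t,·) dν_t`.  If for a.e. `t` the orientor set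
`Q(t) = {(a,F(t,s)) : a ≥ φ(t,s), s ∈ K}` is convex, closed, and contains `(α(t),q(t))`,
then the multivalued map `S(t) = {s ∈ K : φ(t,s) ≤ α(t), F(t,s) = q(t)}` has nonempty
(a.e.) closed values and admits a measurable selection `ū` with `ū(t) ∈ S(t)` a.e. -/
theorem filippov_roxin_selection
    (T₀ : ℝ) (hT₀ : 0 < T₀)
    {K : Type*} [TopologicalSpace K] [CompactSpace K]
    [TopologicalSpace.MetrizableSpace K] [MeasurableSpace K] [BorelSpace K]
    [Nonempty K]
    {X : Type*} [NormedAddCommGroup X] [NormedSpace ℝ X] [CompleteSpace X]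
    (φ : ℝ → K → ℝ) (hφm : ∀ s, Measurable fun t => φ t s) (hφc : ∀ t, Continuous (φ t))
    (F : ℝ → K → X) (hFm : ∀ s, StronglyMeasurable fun t => F t s)
    (hFc : ∀ t, Continuous (F t))
    (ν : ℝ → Measure K)
    (hνw : ∀ g : K →ᵇ ℝ, Measurable fun t => ∫ s, g s ∂(ν t))
    (hνp : ∀ᵐ t ∂(volume.restrict (Set.Icc 0 T₀)), IsProbabilityMeasure (ν t))
    (hQ : ∀ᵐ t ∂(volume.restrict (Set.Icc 0 T₀)),
      Convex ℝ {q : ℝ × X | ∃ s : K, φ t s ≤ q.1 ∧ q.2 = F t s} ∧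
      IsClosed {q : ℝ × X | ∃ s : K, φ t s ≤ q.1 ∧ q.2 = F t s} ∧
      (∫ s, φ t s ∂(ν t), ∫ s, F t s ∂(ν t)) ∈
        {q : ℝ × X | ∃ s : K, φ t s ≤ q.1 ∧ q.2 = F t s}) :
    (∀ᵐ t ∂(volume.restrict (Set.Icc 0 T₀)),
        {s : K | φ t s ≤ (∫ s', φ t s' ∂(ν t)) ∧ F t s = ∫ s', F t s' ∂(ν t)}.Nonempty) ∧
    (∀ t : ℝ, IsClosed
        {s : K | φ t s ≤ (∫ s', φ t s' ∂(ν t)) ∧ F t s = ∫ s', F t s' ∂(ν t)}) ∧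
    ∃ u : ℝ → K, Measurable u ∧
      ∀ᵐ t ∂(volume.restrict (Set.Icc 0 T₀)),
        u t ∈ {s : K | φ t s ≤ (∫ s', φ t s' ∂(ν t)) ∧ F t s = ∫ s', F t s' ∂(ν t)} := by
  classical
  letI : MetricSpace K := TopologicalSpace.metrizableSpaceMetric K
  haveI : SeparableSpace K := TopologicalSpace.isSeparable_univ_iff.1 isCompact_univ.isSeparable
  haveI : SecondCountableTopology K := UniformSpace.secondCountable_of_separable K
  set μ := volume.restrict (Set.Icc (0:ℝ) T₀) with hμdef
  set a : ℝ → ℝ := fun t => ∫ s, φ t s ∂(ν t) with hadef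
  set q : ℝ → X := fun t => ∫ s, F t s ∂(ν t) with hqdef
  refine ⟨?_, ?_, ?_⟩
  · -- a.e. nonempty
    filter_upwards [hQ] with t ht
    obtain ⟨s, h1, h2⟩ := ht.2.2
    exact ⟨s, h1, h2.symm⟩
  · -- closed values
    intro t
    have h1 : IsClosed {s : K | φ t s ≤ a t} := isClosed_le (hφc t) continuous_const
    have h2 : IsClosed {s : K | F t s = q t} := isClosed_eq (hFc t) continuous_const
    exact h1.inter h2
  · -- the measurable selection
    set G : ℝ → K → ℝ × X := fun t s => (φ t s, F t s) with hGdef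
    have hGm : ∀ s : K, StronglyMeasurable fun t => G t s := fun s =>
      ((hφm s).stronglyMeasurable).prodMk (hFm s)
    have hGc : ∀ t, Continuous (G t) := fun t => (hφc t).prodMk (hFc t)
    have hGaesm : AEStronglyMeasurable (fun t => ∫ s, G t s ∂(ν t)) μ :=
      frAESM G hGm hGc ν hνw μ hνp
    set ρ : ℝ → ℝ × X := hGaesm.mk _ with hρdef
    have hρ : StronglyMeasurable ρ := hGaesm.stronglyMeasurable_mk
    have heq : (fun t => ∫ s, G t s ∂(ν t)) =ᵐ[μ] ρ := hGaesm.ae_eq_mk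
    have hsplit : ∀ᵐ t ∂μ, (∫ s, G t s ∂(ν t)) = (a t, q t) := by
      filter_upwards [hνp] with t hp
      haveI := hp
      exact integral_pair
        ((hφc t).integrable_of_hasCompactSupport ((isClosed_tsupport _).isCompact))
        ((hFc t).integrable_of_hasCompactSupport ((isClosed_tsupport _).isCompact))
    have hgood : ∀ᵐ t ∂μ, ρ t = (a t, q t) ∧ ∃ s, φ t s ≤ a t ∧ q t = F t s := by
      filter_upwards [heq, hsplit, hQ] with t h1 h2 h3
      exact ⟨h1.symm.trans h2, h3.2.2⟩
    obtain ⟨N, hNsub, hNm, hN0⟩ := exists_measurable_superset_of_null (ae_iff.1 hgood)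
    set E : Set ℝ := Nᶜ with hEdef
    have hEm : MeasurableSet E := hNm.compl
    have hE : ∀ t ∈ E, ρ t = (a t, q t) ∧ ∃ s, φ t s ≤ a t ∧ q t = F t s := by
      intro t ht
      by_contra h
      exact ht (hNsub h)
    have hEae : ∀ᵐ t ∂μ, t ∈ E := by
      rw [ae_iff]
      simpa [hEdef] using hN0
    set H : ℝ → K → ℝ := fun t s =>
      if t ∈ E then max (φ t s - (ρ t).1) 0 + dist (F t s) (ρ t).2 else 0 with hHdef
    have hρ1 : Measurable fun t => (ρ t).1 :=
      (continuous_fst.comp_stronglyMeasurable hρ).measurable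
    have hHm : ∀ s : K, Measurable fun t => H t s := by
      intro s
      apply Measurable.ite hEm ?_ measurable_const
      have hd : Measurable fun t => dist (F t s) (ρ t).2 :=
        (continuous_dist.comp_stronglyMeasurable
          ((hFm s).prodMk (continuous_snd.comp_stronglyMeasurable hρ))).measurable
      exact (((hφm s).sub hρ1).max measurable_const).add hd
    have hHc : ∀ t, Continuous (H t) := by
      intro t
      by_cases ht : t ∈ E
      · simp only [hHdef, if_pos ht]
        exact (((hφc t).sub continuous_const).max continuous_const).add
          ((hFc t).dist continuous_const)
      · simp only [hHdef, if_neg ht]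
        exact continuous_const
    have hH0 : ∀ t s, 0 ≤ H t s := by
      intro t s
      by_cases ht : t ∈ E
      · simp only [hHdef, if_pos ht]
        exact add_nonneg (le_max_right _ _) dist_nonneg
      · simp only [hHdef, if_neg ht]
        exact le_rfl
    have hne : ∀ t, ∃ s, H t s = 0 := by
      intro t
      by_cases ht : t ∈ E
      · obtain ⟨hρeq, s, hφs, hqs⟩ := hE t ht
        refine ⟨s, ?_⟩
        simp only [hHdef, if_pos ht, hρeq]
        rw [max_eq_right (sub_nonpos.2 hφs), ← hqs, dist_self, add_zero]
      · exact ⟨Classical.arbitrary K, by simp [hHdef, if_neg ht]⟩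
    obtain ⟨u, hum, hu0⟩ := frSelection H hHm hHc hH0 hne
    refine ⟨u, hum, ?_⟩
    filter_upwards [hEae] with t htE
    obtain ⟨hρeq, -⟩ := hE t htE
    have h0 := hu0 t
    rw [hHdef] at h0
    simp only [if_pos htE, hρeq] at h0
    have h1 : max (φ t (u t) - a t) 0 = 0 ∧ dist (F t (u t)) (q t) = 0 :=
      (add_eq_zero_iff_of_nonneg (le_max_right _ _) dist_nonneg).1 h0
    constructor
    · have hle : φ t (u t) - a t ≤ max (φ t (u t) - a t) 0 := le_max_left _ _
      rw [h1.1] at hle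
      linarith
    · exact dist_eq_zero.1 h1.2
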